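/- For the multi-space problem, rad(K_w) ≤ 2·rad(K_0) for every w ∈ W such that K_w is nonempty, where K_w := { u ∈ H : P_W u = w and dist(u,V_j) ≤ ε_j for all j = 0,…,n }. -/

import Mathlib

/-- The Chebyshev radius of a set: the infimum of radii of closed balls containing it. -/
noncomputable def chebRadius {H : Type*} [NormedAddCommGroup H] (S : Set H) : ℝ :=
  sInf {r : ℝ | ∃ v : H, S ⊆ Metric.closedBall v r}

/-- The multi-space set `K_w = {u : P_W u = w, dist(u, V_j) ≤ ε_j for j = 0,…,n}`. -/
def multiKw {H : Type*} [NormedAddCommGroup H] [InnerProductSpace ℝ H] {n : ℕ}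
    (W : Submodule ℝ H) [W.HasOrthogonalProjection]
    (V : Fin (n + 1) → Submodule ℝ H) (ε : Fin (n + 1) → ℝ) (w : H) : Set H :=
  {u : H | (W.orthogonalProjectionOnto u : H) = w ∧
    ∀ j : Fin (n + 1), Metric.infDist u (V j : Set H) ≤ ε j}

/-- For the multi-space problem, `rad(K_w) ≤ 2·rad(K_0)` for every `w ∈ W` with `K_w ≠ ∅`. -/
theorem stmt17 {H : Type*} [NormedAddCommGroup H] [InnerProductSpace ℝ H] [CompleteSpace H]
    (n : ℕ) (V : Fin (n + 1) → Submodule ℝ H) [∀ j, FiniteDimensional ℝ (V j)]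
    (hmono : ∀ i j : Fin (n + 1), i ≤ j → V i ≤ V j)
    (hdim : ∀ j : Fin (n + 1), Module.finrank ℝ (V j) = (j : ℕ))
    (W : Submodule ℝ H) [FiniteDimensional ℝ W]
    (ε : Fin (n + 1) → ℝ) (hε : ∀ j, 0 < ε j)
    (hanti : ∀ i j : Fin (n + 1), i ≤ j → ε j ≤ ε i)
    (w : H) (hw : w ∈ W) (hne : (multiKw W V ε w).Nonempty) :
    chebRadius (multiKw W V ε w) ≤ 2 * chebRadius (multiKw W V ε 0) := by
  classical
  obtain ⟨u0, hu0⟩ := hne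
  -- key: for u ∈ K_w, the half-difference lies in K_0
  have key : ∀ u ∈ multiKw W V ε w, (2:ℝ)⁻¹ • (u - u0) ∈ multiKw W V ε 0 := by
    intro u hu
    refine ⟨?_, ?_⟩
    · have h1 := hu.1
      have h2 := hu0.1
      have : (W.orthogonalProjectionOnto ((2:ℝ)⁻¹ • (u - u0)) : H)
          = (2:ℝ)⁻¹ • ((W.orthogonalProjectionOnto u : H) - (W.orthogonalProjectionOnto u0 : H)) := by
        simp [map_sub, map_smul]
      rw [this, h1, h2, sub_self, smul_zero]
    · intro j
      have h1 := hu.2 j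
      have h2 := hu0.2 j
      have hVne : ((V j : Set H)).Nonempty := ⟨0, Submodule.zero_mem _⟩
      refine le_of_forall_pos_le_add ?_
      intro δ hδ
      obtain ⟨p, hp, hpd⟩ := (Metric.infDist_lt_iff hVne).mp
        (lt_of_le_of_lt h1 (by linarith : ε j < ε j + δ))
      obtain ⟨q, hq, hqd⟩ := (Metric.infDist_lt_iff hVne).mp
        (lt_of_le_of_lt h2 (by linarith : ε j < ε j + δ))
      have hm : (2:ℝ)⁻¹ • (p - q) ∈ (V j : Set H) :=
        Submodule.smul_mem _ _ (Submodule.sub_mem _ hp hq)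
      refine (Metric.infDist_le_dist_of_mem hm).trans ?_
      rw [dist_eq_norm, ← smul_sub, norm_smul]
      have heq : (u - u0) - (p - q) = (u - p) - (u0 - q) := by abel
      have htri : ‖(u - u0) - (p - q)‖ ≤ ‖u - p‖ + ‖u0 - q‖ := by
        rw [heq]; exact norm_sub_le _ _
      rw [dist_eq_norm] at hpd hqd
      have : ‖((2:ℝ)⁻¹ : ℝ)‖ = (2:ℝ)⁻¹ := by norm_num
      rw [this]
      nlinarith [norm_nonneg ((u - u0) - (p - q))]
  -- the admissible-radius set for K_0 is nonempty: V 0 = ⊥ gives a bound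
  have hV0 : V 0 = ⊥ := Submodule.finrank_eq_zero.mp (by simpa using hdim 0)
  have hS0ne : ({r : ℝ | ∃ v : H, multiKw W V ε 0 ⊆ Metric.closedBall v r}).Nonempty := by
    refine ⟨ε 0, 0, ?_⟩
    intro u hu
    have := hu.2 0
    rw [hV0] at this
    simp only [Submodule.bot_coe, Metric.infDist_singleton] at this
    simpa [Metric.mem_closedBall] using this
  -- for every admissible radius r for K_0, 2r is admissible for K_w
  have hstep : ∀ r ∈ ({r : ℝ | ∃ v : H, multiKw W V ε 0 ⊆ Metric.closedBall v r}),
      chebRadius (multiKw W V ε w) ≤ 2 * r := by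
    rintro r ⟨v, hv⟩
    have hsub : multiKw W V ε w ⊆ Metric.closedBall (u0 + (2:ℝ) • v) (2 * r) := by
      intro u hu
      have h := hv (key u hu)
      rw [Metric.mem_closedBall, dist_eq_norm] at h ⊢
      have : u - (u0 + (2:ℝ) • v) = (2:ℝ) • ((2:ℝ)⁻¹ • (u - u0) - v) := by
        rw [smul_sub, smul_inv_smul₀ (by norm_num : (2:ℝ) ≠ 0)]
        abel
      rw [this, norm_smul]
      simp only [Real.norm_ofNat]
      linarith
    have hbdd : BddBelow {r : ℝ | ∃ v : H, multiKw W V ε w ⊆ Metric.closedBall v r} := by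
      refine ⟨0, ?_⟩
      rintro r' ⟨v', hv'⟩
      have := hv' hu0
      rw [Metric.mem_closedBall] at this
      exact le_trans dist_nonneg this
    exact csInf_le hbdd ⟨u0 + (2:ℝ) • v, hsub⟩
  have h2 : chebRadius (multiKw W V ε w) / 2 ≤ chebRadius (multiKw W V ε 0) := by
    refine le_csInf hS0ne ?_
    intro r hr
    have := hstep r hr
    linarith
  linarith
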